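/- Let H be an arrangement with simplification H̃, π : L_{H̃} → L_H the rank-preserving surjection of flat lattices sending a flat of H̃ to the minimal flat of H containing it, and E = π_* A_{H̃} the pushforward of the structure sheaf. Then for every flat F of H: (a) the costalk E(F,∂F) is a free A_H(F)-module generated in degree 2·rk F with basis {e_E : E ∈ π^{-1}(F)} indexed by the fiber of π over F; and (b) the map of reductions from E(F,∂F) to the reduction of E(F) is surjective in top degree 2·rk F. -/

import Mathlib

open MvPolynomial
set_option synthInstance.maxHeartbeats 1000000
set_option maxHeartbeats 1000000
set_option linter.unusedSectionVars false

variable {I : Type} [Fintype I] [DecidableEq I]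

def IsFlat (V : AffineSubspace ℝ (I → ℝ)) (F : Finset I) : Prop :=
  ∃ x ∈ V, ∀ i : I, i ∈ F ↔ x i = 0

def Essential (V : AffineSubspace ℝ (I → ℝ)) : Prop :=
  ∀ i : I, ∃ x ∈ V, ∃ y ∈ V, x i ≠ y i

noncomputable def resF (V : AffineSubspace ℝ (I → ℝ)) (F : Finset I) :
    V.direction →ₗ[ℝ] ({i : I // i ∈ F} → ℝ) :=
  (LinearMap.funLeft ℝ ℝ (fun i : {i : I // i ∈ F} => (i : I))).comp V.direction.subtype

/-- `S` is a face of the matroid complex of the arrangement (equivalently, of its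
simplification `H̃`). -/
def Face (V : AffineSubspace ℝ (I → ℝ)) (S : Finset I) : Prop :=
  Function.Surjective (resF V S)

/-- The rank of a flat `F` (the codimension of `H_F`). -/
noncomputable def rkF (V : AffineSubspace ℝ (I → ℝ)) (F : Finset I) : ℕ :=
  Module.finrank ℝ (LinearMap.range (resF V F))

noncomputable def faceIdeal (Δ : Set (Finset I)) : Ideal (MvPolynomial I ℝ) :=
  Ideal.span {p | ∃ S : Finset I, S ∉ Δ ∧ p = ∏ i ∈ S, (X i : MvPolynomial I ℝ)}

/-- The defining ideal of the stalk `E(F) = ℝ[Δ_{H̃_F}]` of `E = π_* A_{H̃}`: the face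
ideal of the matroid complex of the localization at `F` (faces = independent subsets
of `F`). -/
noncomputable def locFaceIdeal (V : AffineSubspace ℝ (I → ℝ)) (F : Finset I) :
    Ideal (MvPolynomial I ℝ) :=
  faceIdeal {S | S ⊆ F ∧ Face V S}

/-- The stalk `E(F) = ℝ[Δ_{H̃_F}]`. -/
abbrev EStalk (V : AffineSubspace ℝ (I → ℝ)) (F : Finset I) : Type :=
  MvPolynomial I ℝ ⧸ locFaceIdeal V F

/-- The copy of `A_H(F) = Sym V(F)` inside `E(F)`: the subalgebra generated by the
images of the linear forms `∑_{i∈F} v_i e_i`, `v ∈ V₀`. -/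
noncomputable def AF (V : AffineSubspace ℝ (I → ℝ)) (F : Finset I) :
    Subalgebra ℝ (EStalk V F) :=
  Algebra.adjoin ℝ ((Ideal.Quotient.mk (locFaceIdeal V F)) ''
    {p | ∃ v ∈ V.direction, p = ∑ i ∈ F, v i • (X i : MvPolynomial I ℝ)})

/-- The preimage in `ℝ[e_i : i ∈ I]` of the costalk `E(F, ∂F)`: polynomials mapping to
zero in every stalk `E(E)` for flats `E < F`. -/
noncomputable def costalkIdeal (V : AffineSubspace ℝ (I → ℝ)) (F : Finset I) :
    Ideal (MvPolynomial I ℝ) :=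
  ⨅ (E : Finset I) (_ : IsFlat V E ∧ E ⊂ F), locFaceIdeal V E

/-- The costalk `E(F, ∂F)` as an `A_H(F)`-submodule of `E(F)`. -/
noncomputable def costalkSub (V : AffineSubspace ℝ (I → ℝ)) (F : Finset I) :
    Submodule (AF V F) (EStalk V F) :=
  Submodule.restrictScalars (AF V F)
    (((costalkIdeal V F).map (Ideal.Quotient.mk (locFaceIdeal V F)) :
        Ideal (EStalk V F)) : Submodule (EStalk V F) (EStalk V F))

/-- The ideal generated by the linear forms from `V(F)`. -/
noncomputable def linIdeal (V : AffineSubspace ℝ (I → ℝ)) (F : Finset I) :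
    Ideal (MvPolynomial I ℝ) :=
  Ideal.span {p | ∃ v ∈ V.direction, p = ∑ i ∈ F, v i • (X i : MvPolynomial I ℝ)}


namespace S19

variable (V : AffineSubspace ℝ (I → ℝ))

lemma face_mono {S T : Finset I} (hST : S ⊆ T) (hT : Face V T) : Face V S := by
  intro y
  obtain ⟨w, hw⟩ := hT (fun j => if h : (j : I) ∈ S then y ⟨j, h⟩ else 0)
  refine ⟨w, funext fun i => ?_⟩
  have h2 := congrFun hw ⟨i.1, hST i.2⟩
  simp only [resF, LinearMap.coe_comp, Function.comp_apply, LinearMap.funLeft_apply] at h2 ⊢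
  rw [h2, dif_pos i.2]

lemma range_resF_eq_top {S : Finset I} (hS : Face V S) :
    LinearMap.range (resF V S) = ⊤ := LinearMap.range_eq_top.mpr hS

lemma finrank_range_resF {S : Finset I} (hS : Face V S) :
    Module.finrank ℝ (LinearMap.range (resF V S)) = S.card := by
  rw [range_resF_eq_top V hS, finrank_top, Module.finrank_fintype_fun_eq_card, Fintype.card_coe]

lemma resF_comp {S F : Finset I} (hSF : S ⊆ F) :
    resF V S = (LinearMap.funLeft ℝ ℝ
      (fun i : {i : I // i ∈ S} => (⟨i.1, hSF i.2⟩ : {i : I // i ∈ F}))).comp (resF V F) := by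
  ext w i
  rfl

lemma card_le_rk_of_face {S F : Finset I} (hSF : S ⊆ F) (hS : Face V S) :
    S.card ≤ rkF V F := by
  rw [← finrank_range_resF V hS, resF_comp V hSF, LinearMap.range_comp]
  exact (Submodule.finrank_map_le _ _).trans le_rfl

lemma coords_vanish {B F : Finset I} (hBF : B ⊆ F) (hB : Face V B)
    (hcard : B.card = rkF V F) (w : V.direction) (hw : ∀ i ∈ B, (w : I → ℝ) i = 0) :
    ∀ j ∈ F, (w : I → ℝ) j = 0 := by
  have hker : LinearMap.ker (resF V F) ≤ LinearMap.ker (resF V B) := by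
    intro u hu
    rw [LinearMap.mem_ker] at hu ⊢
    funext i
    have := congrFun hu ⟨i.1, hBF i.2⟩
    exact this
  have h1 := LinearMap.finrank_range_add_finrank_ker (resF V B)
  have h2 := LinearMap.finrank_range_add_finrank_ker (resF V F)
  have hrB : Module.finrank ℝ (LinearMap.range (resF V B)) = rkF V F := by
    rw [finrank_range_resF V hB, hcard]
  have hrF : Module.finrank ℝ (LinearMap.range (resF V F)) = rkF V F := rfl
  have heq : LinearMap.ker (resF V F) = LinearMap.ker (resF V B) := by
    apply Submodule.eq_of_le_of_finrank_le hker
    omega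
  have hwB : w ∈ LinearMap.ker (resF V B) := by
    rw [LinearMap.mem_ker]
    funext i
    exact hw i.1 i.2
  rw [← heq, LinearMap.mem_ker] at hwB
  intro j hj
  exact congrFun hwB ⟨j, hj⟩

lemma card_lt_of_flat {E F S : Finset I} (hE : IsFlat V E) (hEF : E ⊂ F) (hF : IsFlat V F)
    (hSE : S ⊆ E) (hS : Face V S) : S.card < rkF V F := by
  have hle : S.card ≤ rkF V F := card_le_rk_of_face V (hSE.trans hEF.subset) hS
  rcases hle.lt_or_eq with h | h
  · exact h
  exfalso
  obtain ⟨x₀, hx₀V, hx₀⟩ := hF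
  obtain ⟨y, hyV, hy⟩ := hE
  have hwmem : x₀ - y ∈ V.direction := by
    have := AffineSubspace.vsub_mem_direction hx₀V hyV
    simpa [vsub_eq_sub] using this
  set w : V.direction := ⟨x₀ - y, hwmem⟩ with hwdef
  have hw : ∀ i ∈ S, (w : I → ℝ) i = 0 := by
    intro i hi
    have h1 : x₀ i = 0 := (hx₀ i).mp (hEF.subset (hSE hi))
    have h2 : y i = 0 := (hy i).mp (hSE hi)
    simp [hwdef, h1, h2]
  have hall := coords_vanish V (hSE.trans hEF.subset) hS h w hw
  obtain ⟨j, hjF, hjE⟩ := Finset.exists_of_ssubset hEF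
  have h1 : x₀ j = 0 := (hx₀ j).mp hjF
  have h2 : (w : I → ℝ) j = 0 := hall j hjF
  have h3 : y j = 0 := by
    have : x₀ j - y j = 0 := h2
    linarith
  exact hjE ((hy j).mpr h3)

lemma exists_dual {B : Finset I} (hB : Face V B) {k : I} (hk : k ∈ B) :
    ∃ v : V.direction, (v : I → ℝ) k = 1 ∧ ∀ i ∈ B, i ≠ k → (v : I → ℝ) i = 0 := by
  obtain ⟨v, hv⟩ := hB (Pi.single ⟨k, hk⟩ 1)
  refine ⟨v, ?_, ?_⟩
  · have := congrFun hv ⟨k, hk⟩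
    simpa [resF] using this
  · intro i hi hik
    have h2 : (v : I → ℝ) i
        = (Pi.single (⟨k, hk⟩ : {x : I // x ∈ B}) (1:ℝ) : {x : I // x ∈ B} → ℝ) ⟨i, hi⟩ :=
      congrFun hv ⟨i, hi⟩
    rw [h2, Pi.single_eq_of_ne (by simp [Subtype.ext_iff]; exact hik)]

lemma exists_flat_between {F S : Finset I} (hF : IsFlat V F) (hSF : S ⊆ F)
    (hS : Face V S) (hcard : S.card < rkF V F) :
    ∃ E : Finset I, IsFlat V E ∧ E ⊂ F ∧ S ⊆ E := by
  classical
  obtain ⟨x₀, hx₀V, hx₀⟩ := hF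
  -- find w in ker (resF V S) not in ker (resF V F)
  have hnle : ¬ LinearMap.ker (resF V S) ≤ LinearMap.ker (resF V F) := by
    intro hle
    have h1 := LinearMap.finrank_range_add_finrank_ker (resF V S)
    have h2 := LinearMap.finrank_range_add_finrank_ker (resF V F)
    have hrS : Module.finrank ℝ (LinearMap.range (resF V S)) = S.card :=
      finrank_range_resF V hS
    have hrF : Module.finrank ℝ (LinearMap.range (resF V F)) = rkF V F := rfl
    have hm := Submodule.finrank_mono hle
    omega
  obtain ⟨w, hwS, hwF⟩ := SetLike.not_le_iff_exists.mp hnle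
  rw [LinearMap.mem_ker] at hwS hwF
  have hwS' : ∀ i ∈ S, (w : I → ℝ) i = 0 := fun i hi => congrFun hwS ⟨i, hi⟩
  have hwF' : ∃ j ∈ F, (w : I → ℝ) j ≠ 0 := by
    by_contra hcon
    push_neg at hcon
    exact hwF (funext fun j => hcon j.1 j.2)
  obtain ⟨j, hjF, hjw⟩ := hwF'
  -- bad parameter set
  set Tbad : Set ℝ := {(0:ℝ)} ∪ ⋃ (i : I), {t | x₀ i ≠ 0 ∧ x₀ i + t * (w : I → ℝ) i = 0}
    with hTbad
  have hfin : Tbad.Finite := by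
    apply Set.Finite.union (Set.finite_singleton 0)
    apply Set.finite_iUnion
    intro i
    by_cases hwi : (w : I → ℝ) i = 0
    · have : {t : ℝ | x₀ i ≠ 0 ∧ x₀ i + t * (w : I → ℝ) i = 0} = ∅ := by
        ext t; simp [hwi]
      rw [this]; exact Set.finite_empty
    · apply Set.Finite.subset (Set.finite_singleton (-(x₀ i) / (w : I → ℝ) i))
      intro t ht
      obtain ⟨h1, h2⟩ := ht
      simp only [Set.mem_singleton_iff]
      field_simp
      linarith only [h2]
  obtain ⟨t, ht⟩ := hfin.infinite_compl.nonempty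
  have ht0 : t ≠ 0 := by
    intro h; exact ht (Or.inl (by simp [h]))
  have htbad : ∀ i : I, x₀ i ≠ 0 → x₀ i + t * (w : I → ℝ) i ≠ 0 := by
    intro i h1 h2
    exact ht (Or.inr (Set.mem_iUnion.mpr ⟨i, ⟨h1, h2⟩⟩))
  set x : I → ℝ := fun i => x₀ i + t * (w : I → ℝ) i with hxdef
  have hxV : x ∈ V := by
    have hmem : t • (w : I → ℝ) ∈ V.direction := Submodule.smul_mem _ t w.2
    have := AffineSubspace.vadd_mem_of_mem_direction hmem hx₀V
    have hx : x = t • (w : I → ℝ) +ᵥ x₀ := by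
      funext i; simp [hxdef, vadd_eq_add]; ring
    rw [hx]; exact this
  refine ⟨F.filter (fun i => (w : I → ℝ) i = 0), ⟨x, hxV, ?_⟩, ?_, ?_⟩
  · intro i
    constructor
    · intro hi
      rw [Finset.mem_filter] at hi
      have h1 : x₀ i = 0 := (hx₀ i).mp hi.1
      simp [hxdef, h1, hi.2]
    · intro hxi
      by_cases hiF : i ∈ F
      · have h1 : x₀ i = 0 := (hx₀ i).mp hiF
        rw [Finset.mem_filter]
        refine ⟨hiF, ?_⟩
        have h2' : t * (w : I → ℝ) i = 0 := by
          have h3 : x₀ i + t * (w : I → ℝ) i = 0 := hxi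
          linarith only [h3, h1]
        rcases mul_eq_zero.mp h2' with h | h
        · exact absurd h ht0
        · exact h
      · exfalso
        have h1 : x₀ i ≠ 0 := fun h => hiF ((hx₀ i).mpr h)
        exact htbad i h1 hxi
  · constructor
    · exact Finset.filter_subset _ _
    · intro hsub
      have := hsub hjF
      rw [Finset.mem_filter] at this
      exact hjw this.2
  · intro i hi
    rw [Finset.mem_filter]
    exact ⟨hSF hi, hwS' i hi⟩

/-! ### Monomial machinery -/

noncomputable def sqf (S : Finset I) : I →₀ ℕ := ∑ i ∈ S, Finsupp.single i 1

lemma sqf_apply (S : Finset I) (i : I) : sqf S i = if i ∈ S then 1 else 0 := by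
  classical
  rw [sqf, Finset.sum_apply']
  simp only [Finsupp.single_apply]
  exact Finset.sum_ite_eq' S i (fun _ => 1)

lemma sqf_support (S : Finset I) : (sqf S).support = S := by
  ext i
  simp [Finsupp.mem_support_iff, sqf_apply]

lemma prod_X_eq (S : Finset I) :
    (∏ i ∈ S, (X i : MvPolynomial I ℝ)) = monomial (sqf S) 1 := by
  classical
  induction S using Finset.induction_on with
  | empty => simp [sqf]
  | insert _ _ hnotmem ih =>
      rw [Finset.prod_insert hnotmem, ih, X, monomial_mul, sqf, sqf,
        Finset.sum_insert hnotmem, one_mul]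

/-- the "monomial ideal" characterization target -/
noncomputable def supIdeal (Δ : Set (Finset I)) : Ideal (MvPolynomial I ℝ) where
  carrier := {p | ∀ c ∈ p.support, ∃ S : Finset I, S ∉ Δ ∧ S ⊆ c.support}
  add_mem' := by
    intro p q hp hq c hc
    have := MvPolynomial.support_add hc
    rw [Finset.mem_union] at this
    rcases this with h | h
    · exact hp c h
    · exact hq c h
  zero_mem' := by
    intro c hc
    simp at hc
  smul_mem' := by
    intro q p hp c hc
    rw [smul_eq_mul] at hc
    have := MvPolynomial.support_mul q p hc
    rw [Finset.mem_add] at this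
    obtain ⟨a, ha, b, hb, hab⟩ := this
    obtain ⟨S, hS1, hS2⟩ := hp b hb
    refine ⟨S, hS1, hS2.trans ?_⟩
    intro i hi
    rw [Finsupp.mem_support_iff] at hi ⊢
    subst hab
    simp only [Finsupp.add_apply]
    omega

lemma mem_faceIdeal_iff (Δ : Set (Finset I))
    (hΔ : ∀ S T : Finset I, S ⊆ T → T ∈ Δ → S ∈ Δ) (p : MvPolynomial I ℝ) :
    p ∈ faceIdeal Δ ↔ ∀ c ∈ p.support, c.support ∉ Δ := by
  constructor
  · intro hp
    have hle : faceIdeal Δ ≤ supIdeal Δ := by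
      rw [faceIdeal, Ideal.span_le]
      rintro q ⟨S, hS, rfl⟩
      intro c hc
      rw [prod_X_eq, MvPolynomial.support_monomial] at hc
      simp only [if_neg (one_ne_zero : (1:ℝ) ≠ 0), Finset.mem_singleton] at hc
      subst hc
      exact ⟨S, hS, by rw [sqf_support]⟩
    intro c hc hmem
    obtain ⟨S, hS1, hS2⟩ := hle hp c hc
    exact hS1 (hΔ S c.support hS2 hmem)
  · intro h
    rw [MvPolynomial.as_sum p]
    apply Ideal.sum_mem
    intro c hc
    have hle : sqf c.support ≤ c := by
      rw [Finsupp.le_def]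
      intro i
      rw [sqf_apply]
      split
      · rename_i hi
        rw [Finsupp.mem_support_iff] at hi
        omega
      · omega
    have heq : monomial c (coeff c p)
        = monomial (c - sqf c.support) (coeff c p) * (∏ i ∈ c.support, (X i : MvPolynomial I ℝ)) := by
      rw [prod_X_eq, monomial_mul, mul_one, tsub_add_cancel_of_le hle]
    rw [heq]
    exact Ideal.mul_mem_left _ _ (Ideal.subset_span ⟨c.support, h c hc, rfl⟩)

lemma mem_locFaceIdeal_iff (E : Finset I) (p : MvPolynomial I ℝ) :
    p ∈ locFaceIdeal V E ↔
      ∀ c ∈ p.support, ¬(c.support ⊆ E ∧ Face V (c.support)) := by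
  rw [locFaceIdeal, mem_faceIdeal_iff]
  · rfl
  · rintro S T hST ⟨hTE, hTF⟩
    exact ⟨hST.trans hTE, face_mono V hST hTF⟩

lemma monomial_mem_locFaceIdeal {E : Finset I} {c : I →₀ ℕ}
    (h : ¬(c.support ⊆ E ∧ Face V (c.support))) (t : ℝ) :
    monomial c t ∈ locFaceIdeal V E := by
  rw [mem_locFaceIdeal_iff]
  intro c' hc'
  rw [MvPolynomial.support_monomial] at hc'
  split at hc'
  · simp at hc'
  · rw [Finset.mem_singleton] at hc'
    subst hc'
    exact h

lemma locFaceIdeal_antitone {E F : Finset I} (hEF : E ⊆ F) :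
    locFaceIdeal V F ≤ locFaceIdeal V E := by
  apply Ideal.span_mono
  rintro p ⟨S, hS, rfl⟩
  refine ⟨S, fun hmem => hS ⟨hmem.1.trans hEF, hmem.2⟩, rfl⟩

lemma mem_costalk_iff (F : Finset I) (p : MvPolynomial I ℝ) :
    p ∈ costalkIdeal V F ↔
      ∀ E : Finset I, IsFlat V E ∧ E ⊂ F → p ∈ locFaceIdeal V E := by
  rw [costalkIdeal]
  simp [Ideal.mem_iInf]

lemma loc_le_costalk (F : Finset I) : locFaceIdeal V F ≤ costalkIdeal V F := by
  rw [costalkIdeal]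
  apply le_iInf; intro E; apply le_iInf; intro hE
  exact locFaceIdeal_antitone V hE.2.subset

lemma eB_mem_costalk {F S : Finset I} (hF : IsFlat V F) (hSF : S ⊆ F) (hS : Face V S)
    (hcard : S.card = rkF V F) :
    (∏ i ∈ S, (X i : MvPolynomial I ℝ)) ∈ costalkIdeal V F := by
  rw [mem_costalk_iff]
  rintro E ⟨hE, hEF⟩
  apply Ideal.subset_span
  refine ⟨S, ?_, rfl⟩
  rintro ⟨hSE, hSface⟩
  exact absurd hcard (Nat.ne_of_lt (card_lt_of_flat V hE hEF hF hSE hSface))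

/-- total degree as a full sum -/
def D (c : I →₀ ℕ) : ℕ := ∑ i : I, c i

lemma D_sum_support (c : I →₀ ℕ) : D c = ∑ i ∈ c.support, c i := by
  rw [D]
  apply (Finset.sum_subset (Finset.subset_univ _) _).symm
  intro i _ hi
  rw [Finsupp.mem_support_iff] at hi
  omega

lemma card_le_D (c : I →₀ ℕ) : c.support.card ≤ D c := by
  rw [D_sum_support]
  calc c.support.card = ∑ _i ∈ c.support, 1 := by simp
  _ ≤ ∑ i ∈ c.support, c i := by
      apply Finset.sum_le_sum
      intro i hi
      rw [Finsupp.mem_support_iff] at hi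
      omega

lemma eq_sqf_of_card_eq_D {c : I →₀ ℕ} (h : c.support.card = D c) :
    c = sqf c.support := by
  have h2 : ∑ i ∈ c.support, (c i - 1) = 0 := by
    have h3 : ∑ i ∈ c.support, c i = ∑ i ∈ c.support, (1 + (c i - 1)) := by
      apply Finset.sum_congr rfl
      intro i hi
      rw [Finsupp.mem_support_iff] at hi
      omega
    rw [D_sum_support] at h
    rw [Finset.sum_add_distrib] at h3
    simp at h3
    omega
  rw [Finset.sum_eq_zero_iff] at h2
  ext i
  rw [sqf_apply]
  by_cases hi : c i = 0
  · rw [if_neg (by rw [Finsupp.mem_support_iff]; omega), hi]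
  · have hmem : i ∈ c.support := by rwa [Finsupp.mem_support_iff]
    have := h2 i hmem
    rw [if_pos hmem]
    omega

/-- The key rewriting identity. -/
lemma key_identity {F : Finset I} (c : I →₀ ℕ) (hcF : c.support ⊆ F) {k : I}
    (hk : k ∈ c.support) (v : I → ℝ) (hvk : v k = 1)
    (hv0 : ∀ i ∈ c.support, i ≠ k → v i = 0) :
    (monomial c (1:ℝ)) =
      monomial (c - Finsupp.single k 1) 1 * (∑ i ∈ F, v i • X i)
      - ∑ i ∈ F \ c.support,
          v i • monomial ((c - Finsupp.single k 1) + Finsupp.single i 1) 1 := by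
  classical
  have hkF : k ∈ F := hcF hk
  have hck : 1 ≤ c k := by
    rw [Finsupp.mem_support_iff] at hk; omega
  have hmul : monomial (c - Finsupp.single k 1) (1:ℝ) * (∑ i ∈ F, v i • X i)
      = ∑ i ∈ F, v i • monomial ((c - Finsupp.single k 1) + Finsupp.single i 1) 1 := by
    rw [Finset.mul_sum]
    apply Finset.sum_congr rfl
    intro i _
    rw [mul_smul_comm, X, monomial_mul, one_mul]
  have hle : Finsupp.single k 1 ≤ c := by
    rw [Finsupp.le_def]
    intro i
    rw [Finsupp.single_apply]
    split
    · rename_i h; subst h; omega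
    · omega
  have hsplit : ∑ i ∈ F, v i • monomial ((c - Finsupp.single k 1) + Finsupp.single i 1) (1:ℝ)
      = (∑ i ∈ F \ c.support,
          v i • monomial ((c - Finsupp.single k 1) + Finsupp.single i 1) 1)
        + monomial c 1 := by
    rw [← Finset.sum_erase_add F _ hkF]
    congr 1
    · symm
      apply Finset.sum_subset
      · intro i hi
        rw [Finset.mem_sdiff] at hi
        rw [Finset.mem_erase]
        exact ⟨fun h => hi.2 (h ▸ hk), hi.1⟩
      · intro i hi hni
        rw [Finset.mem_erase] at hi
        rw [Finset.mem_sdiff] at hni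
        push_neg at hni
        have : v i = 0 := hv0 i (hni hi.2) hi.1
        rw [this, zero_smul]
    · rw [hvk, tsub_add_cancel_of_le hle, one_smul]
  rw [hmul, hsplit]
  ring

lemma sup_smul_mem {J : Ideal (MvPolynomial I ℝ)} {p : MvPolynomial I ℝ} (hp : p ∈ J)
    (t : ℝ) : t • p ∈ J := by
  rw [MvPolynomial.smul_eq_C_mul]
  exact Ideal.mul_mem_left _ _ hp

lemma monomial_mem_sup {F : Finset I} (hF : IsFlat V F) :
    ∀ (n : ℕ) (c : I →₀ ℕ), rkF V F - c.support.card ≤ n → D c = rkF V F →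
      monomial c (1:ℝ) ∈ costalkIdeal V F ⊔ linIdeal V F := by
  intro n
  induction n with
  | zero =>
    intro c hn hD
    by_cases hface : c.support ⊆ F ∧ Face V (c.support)
    · -- card ≤ r and r - card ≤ 0 so card = r... card ≤ D c = r always
      have hcard : c.support.card = rkF V F := by
        have := card_le_rk_of_face V hface.1 hface.2
        omega
      have heq : c = sqf c.support := eq_sqf_of_card_eq_D (by omega)
      apply Ideal.mem_sup_left
      rw [heq, ← prod_X_eq]
      exact eB_mem_costalk V hF hface.1 hface.2 hcard
    · exact Ideal.mem_sup_left (loc_le_costalk V F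
        (monomial_mem_locFaceIdeal V hface 1))
  | succ n ih =>
    intro c hn hD
    by_cases hface : c.support ⊆ F ∧ Face V (c.support)
    · by_cases hcard : c.support.card = rkF V F
      · have heq : c = sqf c.support := eq_sqf_of_card_eq_D (by omega)
        apply Ideal.mem_sup_left
        rw [heq, ← prod_X_eq]
        exact eB_mem_costalk V hF hface.1 hface.2 hcard
      · have hlt : c.support.card < rkF V F :=
          lt_of_le_of_ne (card_le_rk_of_face V hface.1 hface.2) hcard
        -- find k with c k ≥ 2
        have hk : ∃ k ∈ c.support, 2 ≤ c k := by
          by_contra hcon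
          push_neg at hcon
          have : D c ≤ c.support.card := by
            rw [D_sum_support]
            calc ∑ i ∈ c.support, c i ≤ ∑ _i ∈ c.support, 1 := by
                  apply Finset.sum_le_sum
                  intro i hi
                  have := hcon i hi
                  omega
            _ = c.support.card := by simp
          omega
        obtain ⟨k, hks, hck2⟩ := hk
        obtain ⟨v, hvk, hv0⟩ := exists_dual V hface.2 hks
        rw [key_identity c hface.1 hks (v : I → ℝ) hvk
          (fun i hi hik => hv0 i hi hik)]
        apply Ideal.sub_mem
        · apply Ideal.mem_sup_right
          apply Ideal.mul_mem_left
          exact Ideal.subset_span ⟨(v : I → ℝ), v.2, rfl⟩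
        · apply Ideal.sum_mem
          intro i hi
          rw [Finset.mem_sdiff] at hi
          apply sup_smul_mem
          set c' : I →₀ ℕ := (c - Finsupp.single k 1) + Finsupp.single i 1 with hc'
          have hik : i ≠ k := fun h => hi.2 (h ▸ hks)
          have happ : ∀ j, c' j = (c j - (if k = j then 1 else 0)) + (if i = j then 1 else 0) := by
            intro j
            rw [hc', Finsupp.add_apply, Finsupp.tsub_apply, Finsupp.single_apply,
              Finsupp.single_apply]
          have hsupp : c'.support = insert i c.support := by
            ext j
            rw [Finsupp.mem_support_iff, happ j, Finset.mem_insert, Finsupp.mem_support_iff]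
            by_cases h1 : i = j
            · rw [if_pos h1]
              constructor
              · intro _; left; exact h1.symm
              · intro _; omega
            · rw [if_neg h1]
              by_cases h2 : k = j
              · rw [if_pos h2]
                have hckj : 2 ≤ c j := h2 ▸ hck2
                constructor
                · intro _; right; omega
                · intro _; omega
              · rw [if_neg h2]
                constructor
                · intro h; right; omega
                · intro h
                  rcases h with h | h
                  · exact absurd h.symm h1
                  · omega
          have hnotmem : i ∉ c.support := hi.2
          have hcardc' : c'.support.card = c.support.card + 1 := by
            rw [hsupp, Finset.card_insert_of_notMem hnotmem]
          have hDadd : ∀ a b : I →₀ ℕ, D (a + b) = D a + D b := by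
            intro a b
            rw [D, D, D, ← Finset.sum_add_distrib]
            apply Finset.sum_congr rfl
            intro j _
            rw [Finsupp.add_apply]
          have hDsingle : ∀ j : I, D (Finsupp.single j (1:ℕ)) = 1 := by
            intro j
            rw [D]
            simp [Finsupp.single_apply]
          have hle2 : Finsupp.single k 1 ≤ c := by
            rw [Finsupp.le_def]
            intro j
            rw [Finsupp.single_apply]
            split
            · rename_i h; subst h; omega
            · omega
          have hDc' : D c' = D c := by
            rw [hc', hDadd, hDsingle]
            have h3 : D (c - Finsupp.single k 1) + 1 = D c := by
              have h4 := hDadd (c - Finsupp.single k 1) (Finsupp.single k 1)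
              rw [tsub_add_cancel_of_le hle2, hDsingle] at h4
              omega
            omega
          apply ih
          · omega
          · omega
    · exact Ideal.mem_sup_left (loc_le_costalk V F
        (monomial_mem_locFaceIdeal V hface 1))

/-! ### Part (a) machinery -/

/-- the family of generators of the costalk -/
noncomputable def fam (V : AffineSubspace ℝ (I → ℝ)) (F : Finset I) :
    {S : Finset I // S ⊆ F ∧ Face V S ∧ S.card = rkF V F} → EStalk V F :=
  fun S => Ideal.Quotient.mk (locFaceIdeal V F) (∏ i ∈ S.1, (X i : MvPolynomial I ℝ))

lemma theta_mem_AF (F : Finset I) (v : V.direction) :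
    Ideal.Quotient.mk (locFaceIdeal V F) (∑ i ∈ F, (v : I → ℝ) i • X i) ∈ AF V F :=
  Algebra.subset_adjoin ⟨_, ⟨(v : I → ℝ), v.2, rfl⟩, rfl⟩

lemma C_mem_AF (F : Finset I) (t : ℝ) :
    Ideal.Quotient.mk (locFaceIdeal V F) (C t) ∈ AF V F := by
  have h : (Ideal.Quotient.mk (locFaceIdeal V F)) (C t) = algebraMap ℝ (EStalk V F) t := rfl
  rw [h]
  exact Subalgebra.algebraMap_mem _ t

lemma fam_mem_costalkSub {F : Finset I} (hF : IsFlat V F)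
    (S : {S : Finset I // S ⊆ F ∧ Face V S ∧ S.card = rkF V F}) :
    fam V F S ∈ costalkSub V F := by
  rw [costalkSub, Submodule.restrictScalars_mem]
  exact Ideal.mem_map_of_mem _ (eB_mem_costalk V hF S.2.1 S.2.2.1 S.2.2.2)

lemma mem_span_eB {F : Finset I} (hF : IsFlat V F) {B : Finset I} (hBF : B ⊆ F)
    (hB : Face V B) (hBcard : B.card = rkF V F) :
    ∀ (n : ℕ) (d : I →₀ ℕ), D d ≤ n → d.support ⊆ B →
      Ideal.Quotient.mk (locFaceIdeal V F) (monomial (d + sqf B) 1) ∈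
        Submodule.span (AF V F) (Set.range (fam V F)) := by
  intro n
  induction n with
  | zero =>
    intro d hDd _
    have hd0 : d = 0 := by
      ext i
      have hle : d i ≤ D d := Finset.single_le_sum (fun j _ => Nat.zero_le _) (Finset.mem_univ i)
      simp only [Finsupp.coe_zero, Pi.zero_apply]
      omega
    subst hd0
    rw [zero_add, ← prod_X_eq]
    exact Submodule.subset_span ⟨⟨B, hBF, hB, hBcard⟩, rfl⟩
  | succ n ih =>
    intro d hDd hdB
    by_cases hd0 : d = 0
    · subst hd0
      rw [zero_add, ← prod_X_eq]
      exact Submodule.subset_span ⟨⟨B, hBF, hB, hBcard⟩, rfl⟩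
    · obtain ⟨k, hk⟩ := Finsupp.support_nonempty_iff.mpr hd0
      have hkB : k ∈ B := hdB hk
      have hdk : 1 ≤ d k := by
        rw [Finsupp.mem_support_iff] at hk; omega
      obtain ⟨v, hvk, hv0⟩ := exists_dual V hB hkB
      set c : I →₀ ℕ := d + sqf B with hcdef
      have hcapp : ∀ j, c j = d j + (if j ∈ B then 1 else 0) := by
        intro j; rw [hcdef, Finsupp.add_apply, sqf_apply]
      have hcsupp : c.support = B := by
        ext j
        rw [Finsupp.mem_support_iff, hcapp j]
        by_cases hjB : j ∈ B
        · rw [if_pos hjB]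
          constructor
          · intro _; exact hjB
          · intro _; omega
        · rw [if_neg hjB]
          constructor
          · intro h
            exfalso
            have hmem : j ∈ d.support := by rw [Finsupp.mem_support_iff]; omega
            exact hjB (hdB hmem)
          · intro h; exact absurd h hjB
      have hkc : k ∈ c.support := by rw [hcsupp]; exact hkB
      have hcF : c.support ⊆ F := by rw [hcsupp]; exact hBF
      have hkey := key_identity c hcF hkc (v : I → ℝ) hvk
        (fun i hi hik => hv0 i (hcsupp ▸ hi) hik)
      -- terms over F \ B die in the quotient
      have h0 : ∀ i ∈ F \ c.support,
          Ideal.Quotient.mk (locFaceIdeal V F)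
            (monomial ((c - Finsupp.single k 1) + Finsupp.single i 1) 1) = 0 := by
        intro i hi
        rw [Finset.mem_sdiff, hcsupp] at hi
        rw [Ideal.Quotient.eq_zero_iff_mem]
        apply monomial_mem_locFaceIdeal
        rintro ⟨hsub, hfc⟩
        have hins : insert i B ⊆ ((c - Finsupp.single k 1) + Finsupp.single i 1).support := by
          intro j hj
          rw [Finsupp.mem_support_iff, Finsupp.add_apply, Finsupp.tsub_apply,
            Finsupp.single_apply, Finsupp.single_apply]
          rw [Finset.mem_insert] at hj
          rcases hj with hj | hj
          · subst hj
            rw [if_pos rfl, if_neg (show ¬ k = j from fun h => hi.2 (h ▸ hkB))]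
            omega
          · have hcj : 1 ≤ c j := by rw [hcapp j, if_pos hj]; omega
            have hij : ¬ (i = j) := fun h => hi.2 (h ▸ hj)
            rw [if_neg hij]
            by_cases hkj : k = j
            · subst hkj
              have h2k : 2 ≤ c k := by rw [hcapp k, if_pos hkB]; omega
              rw [if_pos rfl]
              omega
            · rw [if_neg hkj]
              omega
        have hface2 : Face V (insert i B) := face_mono V hins hfc
        have hcard2 := card_le_rk_of_face V (Finset.insert_subset hi.1 hBF) hface2
        rw [Finset.card_insert_of_notMem hi.2] at hcard2
        omega
      -- the rewriting step
      have hc' : c - Finsupp.single k 1 = (d - Finsupp.single k 1) + sqf B := by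
        ext j
        simp only [Finsupp.tsub_apply, Finsupp.add_apply, sqf_apply, Finsupp.single_apply,
          hcapp j]
        by_cases hjB : j ∈ B
        · rw [if_pos hjB]
          by_cases hkj : k = j
          · subst hkj; rw [if_pos rfl]; omega
          · rw [if_neg hkj]; omega
        · rw [if_neg hjB]
          by_cases hkj : k = j
          · subst hkj; rw [if_pos rfl]; omega
          · rw [if_neg hkj]; omega
      have hmkeq : Ideal.Quotient.mk (locFaceIdeal V F) (monomial c 1)
          = Ideal.Quotient.mk (locFaceIdeal V F) (monomial (c - Finsupp.single k 1) 1)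
            * Ideal.Quotient.mk (locFaceIdeal V F) (∑ i ∈ F, (v : I → ℝ) i • X i) := by
        rw [hkey, map_sub, map_mul]
        rw [sub_eq_self, map_sum]
        apply Finset.sum_eq_zero
        intro i hi
        rw [MvPolynomial.smul_eq_C_mul, map_mul, h0 i hi, mul_zero]
      -- conclude via the induction hypothesis
      have hDd' : D (d - Finsupp.single k 1) ≤ n := by
        have hdk' : Finsupp.single k 1 ≤ d := by
          rw [Finsupp.le_def]
          intro j
          rw [Finsupp.single_apply]
          split
          · rename_i h; subst h; omega
          · omega
        have hDadd : D ((d - Finsupp.single k 1) + Finsupp.single k 1)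
            = D (d - Finsupp.single k 1) + D (Finsupp.single k 1) := by
          rw [D, D, D, ← Finset.sum_add_distrib]
          exact Finset.sum_congr rfl (fun j _ => Finsupp.add_apply _ _ _)
        rw [tsub_add_cancel_of_le hdk'] at hDadd
        have hD1 : D (Finsupp.single k (1:ℕ)) = 1 := by
          rw [D]; simp [Finsupp.single_apply]
        omega
      have hsub' : (d - Finsupp.single k 1).support ⊆ B :=
        Finsupp.support_tsub.trans hdB
      have hIH := ih (d - Finsupp.single k 1) hDd' hsub'
      rw [← hc'] at hIH
      have hgoal : Ideal.Quotient.mk (locFaceIdeal V F) (monomial c 1)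
          = (⟨_, theta_mem_AF V F v⟩ : AF V F) •
              Ideal.Quotient.mk (locFaceIdeal V F) (monomial (c - Finsupp.single k 1) 1) := by
        rw [hmkeq, mul_comm]
        exact (Algebra.smul_def
          (⟨Ideal.Quotient.mk (locFaceIdeal V F) (∑ i ∈ F, (v : I → ℝ) i • X i),
            theta_mem_AF V F v⟩ : AF V F)
          (Ideal.Quotient.mk (locFaceIdeal V F)
            (monomial (c - Finsupp.single k 1) (1:ℝ)))).symm
      rw [hcdef] at hgoal
      rw [hgoal]
      exact Submodule.smul_mem _ _ hIH

lemma costalk_le_span {F : Finset I} (hF : IsFlat V F) :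
    ∀ x ∈ costalkSub V F, x ∈ Submodule.span (AF V F) (Set.range (fam V F)) := by
  intro x hx
  rw [costalkSub, Submodule.restrictScalars_mem] at hx
  obtain ⟨p, hp, rfl⟩ := (Ideal.mem_map_iff_of_surjective _
    Ideal.Quotient.mk_surjective).mp hx
  have hrep : (Ideal.Quotient.mk (locFaceIdeal V F)) p
      = ∑ c ∈ p.support,
          (Ideal.Quotient.mk (locFaceIdeal V F)) (monomial c (coeff c p)) := by
    conv_lhs => rw [MvPolynomial.as_sum p]
    rw [map_sum]
  rw [hrep]
  apply Submodule.sum_mem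
  intro c hc
  by_cases hface : c.support ⊆ F ∧ Face V c.support
  · by_cases hcard : c.support.card = rkF V F
    · -- basis support: reduce to mem_span_eB
      have hle : sqf c.support ≤ c := by
        rw [Finsupp.le_def]
        intro i
        rw [sqf_apply]
        split
        · rename_i hi
          rw [Finsupp.mem_support_iff] at hi
          omega
        · omega
      have hc2 : (c - sqf c.support) + sqf c.support = c := tsub_add_cancel_of_le hle
      have hd : (c - sqf c.support).support ⊆ c.support := Finsupp.support_tsub
      have hmem := mem_span_eB V hF hface.1 hface.2 hcard (D (c - sqf c.support))
        (c - sqf c.support) le_rfl hd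
      rw [hc2] at hmem
      have heq : (monomial c) (coeff c p) = C (coeff c p) * monomial c 1 := by
        rw [C_mul_monomial, mul_one]
      rw [heq, map_mul]
      have hsm : (Ideal.Quotient.mk (locFaceIdeal V F)) (C (coeff c p))
            * (Ideal.Quotient.mk (locFaceIdeal V F)) (monomial c 1)
          = (⟨Ideal.Quotient.mk (locFaceIdeal V F) (C (coeff c p)),
              C_mem_AF V F (coeff c p)⟩ : AF V F) •
            (Ideal.Quotient.mk (locFaceIdeal V F)) (monomial c 1) :=
        (Algebra.smul_def _ _).symm
      rw [hsm]
      exact Submodule.smul_mem _ _ hmem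
    · -- independent but not spanning: contradiction with costalk membership
      exfalso
      have hlt : c.support.card < rkF V F :=
        lt_of_le_of_ne (card_le_rk_of_face V hface.1 hface.2) hcard
      obtain ⟨E, hE, hEF, hsubE⟩ := exists_flat_between V hF hface.1 hface.2 hlt
      rw [mem_costalk_iff] at hp
      have hpE := hp E ⟨hE, hEF⟩
      rw [mem_locFaceIdeal_iff] at hpE
      exact hpE c hc ⟨hsubE, hface.2⟩
  · rw [Ideal.Quotient.eq_zero_iff_mem.mpr (monomial_mem_locFaceIdeal V hface _)]
    exact zero_mem _

lemma fam_li {F : Finset I} (hF : IsFlat V F) :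
    LinearIndependent (AF V F) (fam V F) := by
  classical
  rw [linearIndependent_iff']
  intro s g hsum T hT
  set B : Finset I := T.1 with hBdef
  have hBF : B ⊆ F := T.2.1
  have hB : Face V B := T.2.2.1
  have hBcard : B.card = rkF V F := T.2.2.2
  -- the evaluation map killing variables outside B
  set φ : MvPolynomial I ℝ →ₐ[ℝ] MvPolynomial I ℝ :=
    aeval (fun i => if i ∈ B then X i else 0) with hφdef
  have hker : ∀ a ∈ locFaceIdeal V F, φ a = 0 := by
    intro a ha
    have hgen : locFaceIdeal V F ≤ RingHom.ker φ.toRingHom := by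
      rw [locFaceIdeal, faceIdeal, Ideal.span_le]
      rintro q ⟨S, hS, rfl⟩
      rw [SetLike.mem_coe, RingHom.mem_ker]
      have hSB : ¬ S ⊆ B := fun hsub => hS ⟨hsub.trans hBF, face_mono V hsub hB⟩
      obtain ⟨i, hiS, hiB⟩ := Finset.not_subset.mp hSB
      rw [AlgHom.toRingHom_eq_coe, RingHom.coe_coe, map_prod]
      apply Finset.prod_eq_zero hiS
      rw [hφdef, aeval_X, if_neg hiB]
    exact hgen ha
  set φbar : EStalk V F →ₐ[ℝ] MvPolynomial I ℝ :=
    Ideal.Quotient.liftₐ (locFaceIdeal V F) φ hker with hφbardef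
  have hφbar_mk : ∀ q : MvPolynomial I ℝ,
      φbar (Ideal.Quotient.mk (locFaceIdeal V F) q) = φ q := by
    intro q
    rw [hφbardef, Ideal.Quotient.liftₐ_apply]
    rfl
  -- dual family
  set u : {i : I // i ∈ B} → V.direction :=
    fun i => Function.surjInv hB (Pi.single i 1) with hudef
  have hu : ∀ i : {i : I // i ∈ B}, resF V B (u i) = Pi.single i 1 :=
    fun i => Function.surjInv_eq hB _
  have hu' : ∀ (i : {i : I // i ∈ B}) (j : I) (hj : j ∈ B),
      ((u i : I → ℝ)) j = (Pi.single i (1:ℝ) : {i : I // i ∈ B} → ℝ) ⟨j, hj⟩ :=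
    fun i j hj => congrFun (hu i) ⟨j, hj⟩
  set ψ : MvPolynomial I ℝ →ₐ[ℝ] EStalk V F :=
    aeval (fun j => if h : j ∈ B then
      Ideal.Quotient.mk (locFaceIdeal V F) (∑ i ∈ F, ((u ⟨j, h⟩ : I → ℝ) i) • X i)
      else 0) with hψdef
  -- ψ ∘ φbar fixes AF
  have hfix : ∀ x ∈ AF V F, ψ (φbar x) = x := by
    intro x hx
    rw [AF] at hx
    induction hx using Algebra.adjoin_induction with
    | mem x hxmem =>
      obtain ⟨q, ⟨v, hv, rfl⟩, rfl⟩ := hxmem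
      have h1 : φbar (Ideal.Quotient.mk (locFaceIdeal V F) (∑ i ∈ F, v i • X i))
          = ∑ i ∈ B, v i • X i := by
        rw [hφbar_mk, map_sum]
        rw [Finset.sum_congr rfl (fun i _ => by rw [map_smul, hφdef, aeval_X])]
        rw [← Finset.sum_subset hBF (fun i _ hiB => by rw [if_neg hiB, smul_zero])]
        exact Finset.sum_congr rfl (fun i hi => by rw [if_pos hi])
      have h2 : ∀ i : {i : I // i ∈ B}, ψ (v i.1 • X i.1)
          = v i.1 • Ideal.Quotient.mk (locFaceIdeal V F)
              (∑ j ∈ F, ((u i : I → ℝ) j) • X j) := by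
        intro i
        rw [map_smul, hψdef, aeval_X, dif_pos i.2]
      -- the dual-basis coefficient computation
      have hsum_dual : ∀ (jB : I) (hjB : jB ∈ B),
          (∑ i ∈ B.attach, v i.1 * (u i : I → ℝ) jB) = v jB := by
        intro jB hjB
        have h3 : ∀ i : {i : I // i ∈ B}, v i.1 * (u i : I → ℝ) jB
            = if i = ⟨jB, hjB⟩ then v jB else 0 := by
          intro i
          rw [hu' i jB hjB, Pi.single_apply]
          by_cases hij : (⟨jB, hjB⟩ : {i : I // i ∈ B}) = i
          · rw [if_pos hij, if_pos hij.symm, mul_one]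
            rw [← hij]
          · rw [if_neg hij, if_neg (fun h => hij h.symm), mul_zero]
        rw [Finset.sum_congr rfl (fun i _ => h3 i)]
        rw [Finset.sum_ite_eq' B.attach (⟨jB, hjB⟩ : {i : I // i ∈ B}) (fun _ => v jB)]
        rw [if_pos (Finset.mem_attach _ _)]
      -- extend to all of F via coords_vanish
      have hcoeff : ∀ j ∈ F, (∑ i ∈ B.attach, v i.1 * (u i : I → ℝ) j) = v j := by
        set vV : V.direction := ⟨v, hv⟩ with hvVdef
        set w : V.direction := (∑ i ∈ B.attach, v i.1 • u i) - vV with hwdef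
        have hwcoe : ∀ j : I,
            (w : I → ℝ) j = (∑ i ∈ B.attach, v i.1 * (u i : I → ℝ) j) - v j := by
          intro j
          rw [hwdef]
          rw [AddSubgroupClass.coe_sub, Submodule.coe_sum]
          rw [Pi.sub_apply, Finset.sum_apply]
          congr 1
        have hwB : ∀ jB ∈ B, (w : I → ℝ) jB = 0 := by
          intro jB hjB
          rw [hwcoe, hsum_dual jB hjB, sub_self]
        have hwF := coords_vanish V hBF hB hBcard w hwB
        intro j hj
        have := hwF j hj
        rw [hwcoe] at this
        linarith only [this]
      -- polynomial identity
      have hpoly : (∑ i ∈ B.attach,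
            v i.1 • (∑ j ∈ F, ((u i : I → ℝ) j) • (X j : MvPolynomial I ℝ)))
          = ∑ j ∈ F, v j • X j := by
        calc (∑ i ∈ B.attach,
              v i.1 • (∑ j ∈ F, ((u i : I → ℝ) j) • (X j : MvPolynomial I ℝ)))
            = ∑ i ∈ B.attach, ∑ j ∈ F,
                (v i.1 * (u i : I → ℝ) j) • (X j : MvPolynomial I ℝ) := by
              refine Finset.sum_congr rfl fun i _ => ?_
              rw [Finset.smul_sum]
              exact Finset.sum_congr rfl fun j _ => (smul_smul _ _ _)
          _ = ∑ j ∈ F, ∑ i ∈ B.attach,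
                (v i.1 * (u i : I → ℝ) j) • (X j : MvPolynomial I ℝ) := Finset.sum_comm
          _ = ∑ j ∈ F, (∑ i ∈ B.attach, v i.1 * (u i : I → ℝ) j) • (X j : MvPolynomial I ℝ) := by
              refine Finset.sum_congr rfl fun j _ => ?_
              rw [Finset.sum_smul]
          _ = ∑ j ∈ F, v j • X j :=
              Finset.sum_congr rfl fun j hj => by rw [hcoeff j hj]
      have hmk : (∑ i ∈ B.attach, v i.1 • (Ideal.Quotient.mk (locFaceIdeal V F))
            (∑ j ∈ F, ((u i : I → ℝ) j) • X j))
          = (Ideal.Quotient.mk (locFaceIdeal V F))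
              (∑ i ∈ B.attach, v i.1 • ∑ j ∈ F, ((u i : I → ℝ) j) • X j) := by
        rw [← Ideal.Quotient.mkₐ_eq_mk (R₁ := ℝ), map_sum]
        exact Finset.sum_congr rfl fun i _ => (map_smul _ _ _).symm
      rw [h1, ← Finset.sum_attach B (fun i => v i • (X i : MvPolynomial I ℝ)), map_sum,
        Finset.sum_congr rfl (fun i _ => h2 i), hmk, hpoly]
    | algebraMap r => rw [AlgHom.commutes, AlgHom.commutes]
    | add x y hx hy ihx ihy => rw [map_add, map_add, ihx, ihy]
    | mul x y hx hy ihx ihy => rw [map_mul, map_mul, ihx, ihy]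
  -- conclude linear independence
  have h0 := congrArg φbar hsum
  rw [map_zero, map_sum] at h0
  have hterm : ∀ S ∈ s, S ≠ T → φbar (g S • fam V F S) = 0 := by
    intro S hS hST
    have hsmul : g S • fam V F S = ((g S : EStalk V F)) * fam V F S := rfl
    rw [hsmul, map_mul]
    have hSB : ¬ S.1 ⊆ B := by
      intro hsub
      have hSeq : S.1 = B := Finset.eq_of_subset_of_card_le hsub
        (by rw [hBcard, S.2.2.2])
      exact hST (Subtype.ext hSeq)
    obtain ⟨i, hiS, hiB⟩ := Finset.not_subset.mp hSB
    have hfamS : φbar (fam V F S) = φ (∏ i ∈ S.1, X i) := hφbar_mk _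
    have hz : φbar (fam V F S) = 0 := by
      rw [hfamS, map_prod]
      apply Finset.prod_eq_zero hiS
      rw [hφdef, aeval_X, if_neg hiB]
    rw [hz, mul_zero]
  rw [Finset.sum_eq_single_of_mem T hT hterm] at h0
  have hsmulT : g T • fam V F T = ((g T : EStalk V F)) * fam V F T := rfl
  rw [hsmulT, map_mul] at h0
  have hfamT : φbar (fam V F T) = ∏ i ∈ B, X i := by
    have h4 : φbar (fam V F T) = φ (∏ i ∈ T.1, X i) := hφbar_mk _
    rw [h4, map_prod]
    exact Finset.prod_congr rfl fun i hi => by rw [hφdef, aeval_X, if_pos hi]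
  rw [hfamT] at h0
  have hprodne : (∏ i ∈ B, (X i : MvPolynomial I ℝ)) ≠ 0 := by
    rw [prod_X_eq]
    simp only [ne_eq, monomial_eq_zero]
    exact one_ne_zero
  have hzero : φbar ((g T : EStalk V F)) = 0 := by
    rcases mul_eq_zero.mp h0 with h | h
    · exact h
    · exact absurd h hprodne
  have hfixT := hfix ((g T : EStalk V F)) (g T).2
  rw [hzero, map_zero] at hfixT
  exact Subtype.ext hfixT.symm

end S19

open S19 in
/-- for any flat `F` of `H`, (a) the costalk `E(F, ∂F)` of
`E = π_* A_{H̃}` is a free `A_H(F)`-module generated in degree `2 rk F`, with basis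
the monomials `e_S` indexed by the fiber `π^{-1}(F)` (the independent subsets `S ⊆ F`
with `|S| = rk F`); and (b) the map of reductions `E(F,∂F)‾ → E(F)‾` is surjective in
the top degree `2 rk F`: every homogeneous polynomial of degree `rk F` lies in the
costalk ideal plus the ideal of linear forms from `V(F)`. -/
theorem stmt19 (V : AffineSubspace ℝ (I → ℝ))
    (hne : (V : Set (I → ℝ)).Nonempty) (hess : Essential V)
    (F : Finset I) (hF : IsFlat V F) :
    (∃ b : Module.Basis {S : Finset I // S ⊆ F ∧ Face V S ∧ S.card = rkF V F}
        (AF V F) (costalkSub V F),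
      ∀ S : {S : Finset I // S ⊆ F ∧ Face V S ∧ S.card = rkF V F},
        ((b S : costalkSub V F) : EStalk V F) =
        Ideal.Quotient.mk (locFaceIdeal V F) (∏ i ∈ S.1, (X i : MvPolynomial I ℝ))) ∧
    (∀ p : MvPolynomial I ℝ, p.IsHomogeneous (rkF V F) →
      p ∈ costalkIdeal V F ⊔ linIdeal V F) := by
  constructor
  · -- part (a)
    set v : {S : Finset I // S ⊆ F ∧ Face V S ∧ S.card = rkF V F} → costalkSub V F :=
      fun S => ⟨fam V F S, fam_mem_costalkSub V hF S⟩ with hvdef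
    have hli : LinearIndependent (AF V F) v := by
      apply LinearIndependent.of_comp (costalkSub V F).subtype
      have hcomp : ((costalkSub V F).subtype ∘ v) = fam V F := rfl
      rw [hcomp]
      exact fam_li V hF
    have hspan : ⊤ ≤ Submodule.span (AF V F) (Set.range v) := by
      intro x _
      have hx := costalk_le_span V hF x.1 x.2
      have himg : Set.range (fam V F) = (costalkSub V F).subtype '' (Set.range v) := by
        rw [← Set.range_comp]
        rfl
      rw [himg, Submodule.span_image] at hx
      obtain ⟨y, hy, hyx⟩ := hx
      have hyx2 : y = x := Subtype.ext hyx
      rwa [← hyx2]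
    refine ⟨Module.Basis.mk hli hspan, fun S => ?_⟩
    rw [Module.Basis.mk_apply]
    rfl
  · -- part (b)
    intro p hp
    rw [MvPolynomial.as_sum p]
    apply Ideal.sum_mem
    intro c hc
    have hdeg : D c = rkF V F := by
      have h2 := hp (MvPolynomial.mem_support_iff.mp hc)
      have h3 : (Finsupp.weight 1) c = ∑ i ∈ c.support, c i := by
        rw [Finsupp.weight_apply, Finsupp.sum]
        simp
      rw [D_sum_support, ← h3]
      exact h2
    have heq : (monomial c) (coeff c p) = C (coeff c p) * monomial c 1 := by
      rw [C_mul_monomial, mul_one]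
    rw [heq]
    exact Ideal.mul_mem_left _ _
      (monomial_mem_sup V hF (rkF V F - c.support.card) c le_rfl hdeg)
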